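/- (Clifford's theorem) Let k be a field, G a group, and H a normal subgroup of G of finite index n. Let V be a simple module over the group algebra of G over k, and regard V as a module over the group algebra of H over k by restriction along the inclusion H → G. Then there exist m ≤ n simple modules W_1, …, W_m over the group algebra of H and an injective homomorphism of modules over the group algebra of H from V into the direct sum W_1 ⊕ ⋯ ⊕ W_m; in particular, V is a semisimple module over the group algebra of H. -/

import Mathlib

open MonoidAlgebra Submodule LinearMap

section CliffordAux

universe u v w
variable {k : Type u} [Field k] {G : Type v} [Group G] {H : Subgroup G} [hnorm : H.Normal]

/-- Conjugation by `g` as a monoid hom of a normal subgroup. -/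
def cliffConj (g : G) : ↥H →* ↥H where
  toFun h := ⟨g * h * g⁻¹, hnorm.conj_mem h h.2 g⟩
  map_one' := by ext; simp
  map_mul' a b := by ext; simp [mul_assoc]

lemma cliff_single_mul (g : G) (c : MonoidAlgebra k ↥H) :
    single g (1:k) * mapDomainRingHom k H.subtype c
      = mapDomainRingHom k H.subtype (mapDomainRingHom k (cliffConj (H := H) g) c)
        * single g (1:k) := by
  induction c using MonoidAlgebra.induction_linear with
  | zero => simp
  | add f g ihf ihg => simp only [map_add, mul_add, add_mul, ihf, ihg]
  | single h a =>
      have e1 : (mapDomainRingHom k H.subtype (single h a) : MonoidAlgebra k G)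
          = single (h : G) a := MonoidAlgebra.mapDomain_single
      have e2 : (mapDomainRingHom k (cliffConj (H := H) g) (single h a) : MonoidAlgebra k ↥H)
          = single (cliffConj (H := H) g h) a := MonoidAlgebra.mapDomain_single
      have e3 : (mapDomainRingHom k H.subtype (single (cliffConj (H := H) g h) a) :
          MonoidAlgebra k G) = single ((cliffConj (H := H) g h : ↥H) : G) a :=
        MonoidAlgebra.mapDomain_single
      rw [e1, e2, e3, single_mul_single, single_mul_single]
      simp [cliffConj, mul_assoc]

variable {V : Type w} [AddCommGroup V] [Module (MonoidAlgebra k G) V]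
  [Module (MonoidAlgebra k ↥H) V]
  (hres : ∀ (x : MonoidAlgebra k ↥H) (v : V),
    x • v = (MonoidAlgebra.mapDomainRingHom k H.subtype x) • v)

include hres

lemma cliff_iota_smul (h : ↥H) (a : k) (y : V) :
    single ((h : G)) a • y = single h a • y := by
  rw [hres]
  congr 1
  exact (MonoidAlgebra.mapDomain_single).symm

lemma cliff_smul (g : G) (c : MonoidAlgebra k ↥H) (x : V) :
    single g (1:k) • (c • x)
      = (mapDomainRingHom k (cliffConj (H := H) g) c) • (single g (1:k) • x) := by
  rw [hres c x, hres (mapDomainRingHom k (cliffConj (H := H) g) c), ← mul_smul, ← mul_smul,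
    cliff_single_mul]

/-- The twist of a `kH`-submodule by `g`. -/
def cliffTw (g : G) (U : Submodule (MonoidAlgebra k ↥H) V) :
    Submodule (MonoidAlgebra k ↥H) V where
  carrier := {x | single g⁻¹ (1:k) • x ∈ U}
  add_mem' {a b} ha hb := by
    simpa [smul_add] using U.add_mem ha hb
  zero_mem' := by simpa using U.zero_mem
  smul_mem' c x hx := by
    show single g⁻¹ (1:k) • (c • x) ∈ U
    rw [cliff_smul hres]
    exact U.smul_mem _ hx

lemma mem_cliffTw {g : G} {U : Submodule (MonoidAlgebra k ↥H) V} {x : V} :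
    x ∈ cliffTw hres g U ↔ single g⁻¹ (1:k) • x ∈ U := Iff.rfl

lemma cliffTw_one (U : Submodule (MonoidAlgebra k ↥H) V) : cliffTw hres 1 U = U := by
  ext x
  rw [mem_cliffTw]
  rw [inv_one, ← MonoidAlgebra.one_def, one_smul]

lemma cliffTw_cliffTw (g g' : G) (U : Submodule (MonoidAlgebra k ↥H) V) :
    cliffTw hres g (cliffTw hres g' U) = cliffTw hres (g * g') U := by
  ext x
  rw [mem_cliffTw, mem_cliffTw, mem_cliffTw, ← mul_smul, single_mul_single, mul_inv_rev, one_mul]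

lemma cliff_single_inv_smul (g : G) (x : V) :
    single g⁻¹ (1:k) • (single g (1:k) • x) = x := by
  rw [← mul_smul, single_mul_single, inv_mul_cancel, one_mul, ← MonoidAlgebra.one_def, one_smul]

lemma cliffTw_mono {g : G} {U U' : Submodule (MonoidAlgebra k ↥H) V} (h : U ≤ U') :
    cliffTw hres g U ≤ cliffTw hres g U' := fun _x hx => h hx

/-- Twisting as an order isomorphism of the submodule lattice. -/
def cliffTwIso (g : G) :
    Submodule (MonoidAlgebra k ↥H) V ≃o Submodule (MonoidAlgebra k ↥H) V where
  toFun := cliffTw hres g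
  invFun := cliffTw hres g⁻¹
  left_inv U := by rw [cliffTw_cliffTw, inv_mul_cancel, cliffTw_one]
  right_inv U := by rw [cliffTw_cliffTw, mul_inv_cancel, cliffTw_one]
  map_rel_iff' {U U'} := by
    constructor
    · intro h
      intro x hx
      have hx' : single g (1:k) • x ∈ cliffTw hres g U := by
        rw [mem_cliffTw, cliff_single_inv_smul hres]; exact hx
      have h2 : MonoidAlgebra.single g (1:k) • x ∈ cliffTw hres g U' := h hx'
      rw [mem_cliffTw, cliff_single_inv_smul hres] at h2
      exact h2
    · exact fun h => cliffTw_mono hres h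

lemma cliffTw_isCoatom {g : G} {U : Submodule (MonoidAlgebra k ↥H) V} (hU : IsCoatom U) :
    IsCoatom (cliffTw hres g U) :=
  (OrderIso.isCoatom_iff (cliffTwIso hres g) U).mpr hU

lemma cliff_H_smul_mem (U : Submodule (MonoidAlgebra k ↥H) V) (h : ↥H) {x : V} :
    single ((h : G)) (1:k) • x ∈ U ↔ x ∈ U := by
  constructor
  · intro hx
    have := U.smul_mem (single h⁻¹ (1:k)) hx
    rw [← cliff_iota_smul hres, ← mul_smul, single_mul_single, one_mul] at this
    rw [show ((h⁻¹ : ↥H) : G) * (h : G) = 1 by simp, ← MonoidAlgebra.one_def, one_smul] at this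
    exact this
  · intro hx
    have := U.smul_mem (single h (1:k)) hx
    rwa [← cliff_iota_smul hres] at this

lemma cliffTw_mul_mem (g : G) (h : ↥H) (U : Submodule (MonoidAlgebra k ↥H) V) :
    cliffTw hres (g * (h : G)) U = cliffTw hres g U := by
  ext x
  rw [mem_cliffTw, mem_cliffTw, mul_inv_rev]
  have : MonoidAlgebra.single ((h : G)⁻¹ * g⁻¹) (1:k)
      = MonoidAlgebra.single (((h⁻¹ : ↥H) : G)) (1:k) * MonoidAlgebra.single g⁻¹ (1:k) := by
    rw [single_mul_single, one_mul]; norm_num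
  rw [this, mul_smul]
  exact cliff_H_smul_mem hres U h⁻¹ (x := single g⁻¹ (1:k) • x)

end CliffordAux

/-- (Clifford's theorem)  Let `k` be a field, `G` a group, and `H` a normal subgroup of `G`
of finite index `n`.  Let `V` be a simple module over the group algebra `MonoidAlgebra k G`,
regarded as a module over `MonoidAlgebra k H` by restriction along the inclusion `H → G`.
Then there exist `m ≤ n` simple `MonoidAlgebra k H`-modules `W 0, …, W (m-1)` and an
injective `MonoidAlgebra k H`-linear map from `V` into their direct sum `∀ i, W i`;
in particular `V` is a semisimple `MonoidAlgebra k H`-module. -/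
theorem clifford_theorem (k : Type u) [Field k] (G : Type v) [Group G]
    (H : Subgroup G) [H.Normal] (n : ℕ) (hn : H.index = n) (hn0 : n ≠ 0)
    (V : Type w) [AddCommGroup V] [Module (MonoidAlgebra k G) V]
    [Module (MonoidAlgebra k ↥H) V]
    (hres : ∀ (x : MonoidAlgebra k ↥H) (v : V),
      x • v = (MonoidAlgebra.mapDomainRingHom k H.subtype x) • v)
    (hV : IsSimpleModule (MonoidAlgebra k G) V) :
    (∃ m : ℕ, m ≤ n ∧
      ∃ W : Fin m → ModuleCat.{w} (MonoidAlgebra k ↥H),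
        (∀ i, IsSimpleModule (MonoidAlgebra k ↥H) (W i)) ∧
        ∃ f : V →ₗ[MonoidAlgebra k ↥H] ((i : Fin m) → W i), Function.Injective f) ∧
    IsSemisimpleModule (MonoidAlgebra k ↥H) V := by
  classical
  haveI := hV
  have hcard : Nat.card (G ⧸ H) = n := by rw [← Subgroup.index_eq_card]; exact hn
  have hfin : Finite (G ⧸ H) := (Nat.card_ne_zero.mp (by rw [hcard]; exact hn0)).2
  let e : Fin n ≃ G ⧸ H := (Finite.equivFinOfCardEq hcard).symm
  haveI : Nontrivial V := IsSimpleModule.nontrivial (MonoidAlgebra k G) V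
  obtain ⟨v, hv⟩ := exists_ne (0 : V)
  -- the span of the translates of `v` over the group algebra of `H` is everything
  set T : Submodule (MonoidAlgebra k ↥H) V :=
    Submodule.span (MonoidAlgebra k ↥H)
      (Set.range fun c : G ⧸ H => MonoidAlgebra.single (Quotient.out c) (1:k) • v) with hTdef
  have claim1 : ∀ (g : G) (a : k), MonoidAlgebra.single g a • v ∈ T := by
    intro g a
    obtain ⟨h, hh⟩ := QuotientGroup.mk_out_eq_mul H g
    set t : G := (QuotientGroup.mk g : G ⧸ H).out with ht
    have hg : g = ((cliffConj (H := H) t h⁻¹ : ↥H) : G) * t := by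
      simp only [cliffConj, MonoidHom.coe_mk, OneHom.coe_mk]
      rw [hh]
      simp [mul_assoc]
    have hsplit : MonoidAlgebra.single g a
        = MonoidAlgebra.single ((cliffConj (H := H) t h⁻¹ : ↥H) : G) a
          * MonoidAlgebra.single t (1:k) := by
      rw [MonoidAlgebra.single_mul_single, mul_one, ← hg]
    rw [hsplit, mul_smul, cliff_iota_smul hres]
    exact T.smul_mem _ (Submodule.subset_span ⟨QuotientGroup.mk g, rfl⟩)
  have claim2 : ∀ x : MonoidAlgebra k G, x • v ∈ T := by
    intro x
    induction x using MonoidAlgebra.induction_linear with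
    | zero => rw [zero_smul]; exact T.zero_mem
    | add f g hf hg => rw [add_smul]; exact T.add_mem hf hg
    | single g a => exact claim1 g a
  have hT : T = ⊤ := by
    rw [eq_top_iff]
    intro u _
    obtain ⟨x, rfl⟩ := IsSimpleModule.toSpanSingleton_surjective (MonoidAlgebra k G) hv u
    exact claim2 x
  have hfg : (⊤ : Submodule (MonoidAlgebra k ↥H) V).FG := by
    rw [← hT, hTdef]; exact Submodule.fg_span (Set.finite_range _)
  haveI : IsCoatomic (Submodule (MonoidAlgebra k ↥H) V) :=
    CompleteLattice.coatomic_of_top_compact ((Submodule.fg_iff_compact _).mp hfg)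
  obtain ⟨U, hU, -⟩ :=
    (eq_top_or_exists_le_coatom (⊥ : Submodule (MonoidAlgebra k ↥H) V)).resolve_left bot_ne_top
  -- the family of twisted maximal submodules, indexed by the quotient
  set Wc : G ⧸ H → Submodule (MonoidAlgebra k ↥H) V :=
    fun c => cliffTw hres (Quotient.out c) U with hWc
  have htw_eq : ∀ g : G, cliffTw hres g U = Wc (QuotientGroup.mk g) := by
    intro g
    obtain ⟨h, hh⟩ := QuotientGroup.mk_out_eq_mul H g
    show _ = cliffTw hres ((QuotientGroup.mk g : G ⧸ H).out) U
    rw [hh]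
    exact (cliffTw_mul_mem hres g h U).symm
  have hN_single : ∀ (x : V), (∀ c, x ∈ Wc c) → ∀ (g : G) (a : k) (c : G ⧸ H),
      MonoidAlgebra.single g a • x ∈ Wc c := by
    intro x hx g a c
    show MonoidAlgebra.single (Quotient.out c)⁻¹ (1:k) • (MonoidAlgebra.single g a • x) ∈ U
    rw [← mul_smul, MonoidAlgebra.single_mul_single, one_mul]
    have hsplit : MonoidAlgebra.single ((Quotient.out c)⁻¹ * g) a
        = MonoidAlgebra.single (1:G) a
          * MonoidAlgebra.single ((Quotient.out c)⁻¹ * g) (1:k) := by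
      rw [MonoidAlgebra.single_mul_single, one_mul, mul_one]
    rw [hsplit, mul_smul]
    have h1 : MonoidAlgebra.single ((Quotient.out c)⁻¹ * g) (1:k) • x ∈ U := by
      have hx' := hx (QuotientGroup.mk (((Quotient.out c)⁻¹ * g)⁻¹))
      rw [← htw_eq, mem_cliffTw, inv_inv] at hx'
      exact hx'
    have hone := cliff_iota_smul hres (1 : ↥H) a
      (MonoidAlgebra.single ((Quotient.out c)⁻¹ * g) (1:k) • x)
    rw [OneMemClass.coe_one] at hone
    rw [hone]
    exact U.smul_mem _ h1
  -- the intersection of the twists is a submodule over the group algebra of `G`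
  set NS : Submodule (MonoidAlgebra k G) V :=
    { carrier := {x | ∀ c, x ∈ Wc c}
      add_mem' := fun ha hb c => (Wc c).add_mem (ha c) (hb c)
      zero_mem' := fun c => (Wc c).zero_mem
      smul_mem' := by
        intro s x hx
        induction s using MonoidAlgebra.induction_linear with
        | zero => rw [zero_smul]; exact fun c => (Wc c).zero_mem
        | add f g hf hg =>
            rw [add_smul]; exact fun c => (Wc c).add_mem (hf c) (hg c)
        | single g a => exact hN_single x hx g a } with hNS
  have hNSbot : NS = ⊥ := by
    rcases eq_bot_or_eq_top NS with hb | ht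
    · exact hb
    · exfalso
      apply hU.1
      rw [eq_top_iff]
      intro x _
      have hx : x ∈ NS := ht ▸ Submodule.mem_top
      have h1 := hx (QuotientGroup.mk (1:G))
      rw [← htw_eq, cliffTw_one] at h1
      exact h1
  have hNbot : ∀ x : V, (∀ c, x ∈ Wc c) → x = 0 := by
    intro x hx
    have : x ∈ NS := hx
    rw [hNSbot] at this
    simpa using this
  -- the simple quotients and the embedding
  have hsimple : ∀ c, IsSimpleModule (MonoidAlgebra k ↥H) (V ⧸ Wc c) := fun c =>
    isSimpleModule_iff_isCoatom.mpr (cliffTw_isCoatom hres hU)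
  set f : V →ₗ[MonoidAlgebra k ↥H] ((i : Fin n) → V ⧸ Wc (e i)) :=
    LinearMap.pi fun i => (Wc (e i)).mkQ with hf
  have hinj : Function.Injective f := by
    rw [← LinearMap.ker_eq_bot]
    rw [LinearMap.ker_eq_bot']
    intro x hx
    apply hNbot x
    intro c
    obtain ⟨i, rfl⟩ := e.surjective c
    have := congrFun (congrArg (fun z => (z : (i : Fin n) → V ⧸ Wc (e i))) hx) i
    exact (Submodule.Quotient.mk_eq_zero _).mp this
  have hss : ∀ i : Fin n, IsSemisimpleModule (MonoidAlgebra k ↥H) (V ⧸ Wc (e i)) := by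
    intro i
    haveI := hsimple (e i)
    infer_instance
  have hPiSS : IsSemisimpleModule (MonoidAlgebra k ↥H) ((i : Fin n) → V ⧸ Wc (e i)) := by
    refine isSemisimpleModule_of_isSemisimpleModule_submodule'
      (p := fun i => LinearMap.range
        (LinearMap.single (MonoidAlgebra k ↥H) (fun i : Fin n => V ⧸ Wc (e i)) i))
      (fun i => ?_) (LinearMap.iSup_range_single _ _)
    haveI := hss i
    exact IsSemisimpleModule.range _
  have hVss : IsSemisimpleModule (MonoidAlgebra k ↥H) V := by
    haveI := hPiSS
    exact IsSemisimpleModule.congr (M := LinearMap.range f)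
      (LinearEquiv.ofInjective f hinj)
  exact ⟨⟨n, le_rfl, fun i => ModuleCat.of (MonoidAlgebra k ↥H) (V ⧸ Wc (e i)),
    fun i => hsimple (e i), f, hinj⟩, hVss⟩
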